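/- Let $\sigma(z)=1/(1+e^{-z})$ be the sigmoid. Then the function $f(z)=z\sigma(z)$ satisfies $\sup_{z\in\mathbb R}|f'(z)|\le 1.1$, and consequently $|f(x)-f(y)|\le 1.1|x-y|$ for all $x,y\in\mathbb R$. -/

import Mathlib

lemma swish_hasDeriv (z : ℝ) :
    HasDerivAt (fun z : ℝ => z * (1 / (1 + Real.exp (-z))))
      (1 / (1 + Real.exp (-z)) + z * (Real.exp (-z) / (1 + Real.exp (-z)) ^ 2)) z := by
  have hpos : 0 < 1 + Real.exp (-z) := by positivity
  have h1 : HasDerivAt (fun z : ℝ => 1 + Real.exp (-z)) (-Real.exp (-z)) z := by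
    have := ((Real.hasDerivAt_exp (-z)).comp z (hasDerivAt_neg z)).const_add 1
    simpa using this
  have h2 := h1.inv hpos.ne'
  have h3 := (hasDerivAt_id z).mul h2
  simp only [id_eq, one_mul] at h3
  convert h3 using 1
  · ext w; simp [one_div]
  · rfl
  · ext w; simp [one_div]
  · simp only [Pi.inv_apply]; field_simp


lemma eleven_le_exp : (11:ℝ) ≤ Real.exp 2.4 := by
  have h5 : Real.exp 2.4 ^ 5 = Real.exp 12 := by
    rw [← Real.exp_nat_mul]; norm_num
  have h12 : Real.exp 12 = Real.exp 1 ^ 12 := by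
    rw [← Real.exp_nat_mul]; norm_num
  have he1 : (2.7182818283:ℝ) < Real.exp 1 := Real.exp_one_gt_d9
  have hpow : (11:ℝ)^5 ≤ Real.exp 2.4 ^ 5 := by
    rw [h5, h12]
    calc (11:ℝ)^5 ≤ 2.7182818283^12 := by norm_num
      _ ≤ Real.exp 1 ^ 12 := by
          exact pow_le_pow_left₀ (by norm_num) he1.le 12
  exact le_of_pow_le_pow_left₀ (by norm_num) (Real.exp_pos _).le hpow

lemma log_eleven_le : Real.log 11 ≤ 2.4 := by
  rw [← Real.log_exp 2.4]
  exact Real.log_le_log (by norm_num) eleven_le_exp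

lemma swish_expr_le (z : ℝ) :
    1 / (1 + Real.exp (-z)) + z * (Real.exp (-z) / (1 + Real.exp (-z)) ^ 2) ≤ 1.1 := by
  set e := Real.exp (-z) with he
  have hepos : 0 < e := Real.exp_pos _
  have hD : 0 < 1 + e := by positivity
  rcases le_or_gt z 0 with hz | hz
  · have h1 : 1 / (1 + e) ≤ 1 := by rw [div_le_one hD]; linarith
    have h2 : z * (e / (1 + e) ^ 2) ≤ 0 :=
      mul_nonpos_of_nonpos_of_nonneg hz (by positivity)
    linarith
  · have he1 : e ≤ 1 := by
      rw [he]; exact (Real.exp_lt_one_iff.2 (by linarith)).le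
    have hlog : z - Real.log 11 ≤ 1 / (11 * e) - 1 := by
      have h := Real.log_le_sub_one_of_pos (show (0:ℝ) < 1/(11*e) by positivity)
      rw [one_div, Real.log_inv, Real.log_mul (by norm_num) hepos.ne', he,
        Real.log_exp, ← one_div, ← he] at h
      linarith
    have h4 : z * e - Real.log 11 * e ≤ 1/11 - e := by
      have h := mul_le_mul_of_nonneg_right hlog hepos.le
      calc z*e - Real.log 11 * e = (z - Real.log 11) * e := by ring
        _ ≤ (1/(11*e) - 1) * e := h
        _ = 1/11 - e := by field_simp
    have key : (1 + e) + z * e ≤ 1.1 * (1 + e) ^ 2 := by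
      nlinarith [sq_nonneg (11*e - 1), mul_le_mul_of_nonneg_right log_eleven_le hepos.le]
    rw [show 1/(1+e) + z*(e/(1+e)^2) = ((1+e) + z*e)/(1+e)^2 by field_simp]
    rw [div_le_iff₀ (by positivity)]
    linarith

lemma swish_expr_symm (z : ℝ) :
    (1 / (1 + Real.exp (-z)) + z * (Real.exp (-z) / (1 + Real.exp (-z)) ^ 2)) +
    (1 / (1 + Real.exp (-(-z))) + (-z) * (Real.exp (-(-z)) / (1 + Real.exp (-(-z))) ^ 2)) = 1 := by
  have heE : Real.exp (-z) * Real.exp z = 1 := by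
    rw [← Real.exp_add]; simp
  set e := Real.exp (-z)
  set E := Real.exp z
  have h1 : 0 < 1 + e := by positivity
  have h2 : 0 < 1 + E := by positivity
  have hA : 1/(1+e) + 1/(1+E) = 1 := by
    field_simp
    linear_combination -heE
  have hB : e/(1+e)^2 = E/(1+E)^2 := by
    rw [div_eq_div_iff (by positivity) (by positivity)]
    linear_combination (E - e) * heE
  rw [neg_neg]
  show (1/(1+e) + z*(e/(1+e)^2)) + (1/(1+E) + (-z)*(E/(1+E)^2)) = 1
  rw [hB]
  linear_combination hA

/-- Derivative bound for the Swish function `f(z) = z σ(z)`, `σ` the sigmoid, and the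
resulting Lipschitz estimate with constant `1.1`. -/
theorem swish_deriv_bound :
    (∀ z : ℝ, |deriv (fun z : ℝ => z * (1 / (1 + Real.exp (-z)))) z| ≤ 1.1) ∧
    (∀ x y : ℝ, |x * (1 / (1 + Real.exp (-x))) - y * (1 / (1 + Real.exp (-y)))| ≤
      1.1 * |x - y|) := by
  have hder : ∀ z : ℝ, deriv (fun z : ℝ => z * (1 / (1 + Real.exp (-z)))) z =
      1 / (1 + Real.exp (-z)) + z * (Real.exp (-z) / (1 + Real.exp (-z)) ^ 2) :=
    fun z => (swish_hasDeriv z).deriv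
  have habs : ∀ z : ℝ, |deriv (fun z : ℝ => z * (1 / (1 + Real.exp (-z)))) z| ≤ 1.1 := by
    intro z
    rw [hder z, abs_le]
    constructor
    · have h := swish_expr_le (-z)
      have hs := swish_expr_symm z
      linarith
    · exact swish_expr_le z
  refine ⟨habs, ?_⟩
  intro x y
  have hdiff : ∀ w : ℝ, w ∈ (Set.univ : Set ℝ) →
      DifferentiableAt ℝ (fun z : ℝ => z * (1 / (1 + Real.exp (-z)))) w :=
    fun w _ => (swish_hasDeriv w).differentiableAt
  have hb : ∀ w : ℝ, w ∈ (Set.univ : Set ℝ) →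
      ‖deriv (fun z : ℝ => z * (1 / (1 + Real.exp (-z)))) w‖ ≤ 1.1 := by
    intro w _
    simpa [Real.norm_eq_abs] using habs w
  have := (convex_univ : Convex ℝ (Set.univ : Set ℝ)).norm_image_sub_le_of_norm_deriv_le
    hdiff hb (Set.mem_univ y) (Set.mem_univ x)
  simpa [Real.norm_eq_abs] using this
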